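/- For every integer n ≥ 1, the generalized quaternion (dicyclic) group Q_{8n} of order 8n, i.e. the group with presentation ⟨x, y ∣ x² = (xy)² = y^{2n}⟩ (equivalently, Mathlib's QuaternionGroup (2n)), has Grossman's Property A: every class-preserving automorphism of Q_{8n} is inner. -/
import Mathlib


/-- A group `G` has Grossman's Property A if every class-preserving automorphism
(i.e. one sending each element to a conjugate of itself) is inner. -/
def HasPropertyA (G : Type*) [Group G] : Prop :=
  ∀ φ : G ≃* G, (∀ g : G, IsConj g (φ g)) → ∃ h : G, ∀ g : G, φ g = h * g * h⁻¹

namespace QuaternionGroup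

private lemma inv_a {m : ℕ} (i : ZMod (2 * m)) : (a i : QuaternionGroup m)⁻¹ = a (-i) := rfl

private lemma inv_xa {m : ℕ} (i : ZMod (2 * m)) :
    (xa i : QuaternionGroup m)⁻¹ = xa ((m : ZMod (2 * m)) + i) := rfl

private lemma two_m_eq_zero (m : ℕ) : (m : ZMod (2 * m)) + m = 0 := by
  rw [← Nat.cast_add, ← two_mul, ZMod.natCast_self]

/-- An automorphism fixing both generators is the identity. -/
private lemma key {m : ℕ} [NeZero (2 * m)] (φ : QuaternionGroup m ≃* QuaternionGroup m)
    (h1 : φ (a 1) = a 1) (h2 : φ (xa 0) = xa 0) : ∀ g, φ g = g := by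
  have ha : ∀ i : ZMod (2 * m), φ (a i) = a i := by
    intro i
    have hi : (a i : QuaternionGroup m) = a 1 ^ i.val := by
      rw [a_one_pow, ZMod.natCast_rightInverse i]
    rw [hi, map_pow, h1]
  rintro (i | i)
  · exact ha i
  · have hx : (xa i : QuaternionGroup m) = xa 0 * a i := by simp
    rw [hx, map_mul, h2, ha, ← hx]

private lemma conj_a_one {m : ℕ} (c : QuaternionGroup m) :
    c * a 1 * c⁻¹ = a 1 ∨ c * a 1 * c⁻¹ = a (-1) := by
  have h2m := two_m_eq_zero m
  rcases c with j | j
  · left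
    rw [inv_a, a_mul_a, a_mul_a]
    congr 1
    ring
  · right
    rw [inv_xa, xa_mul_a, xa_mul_xa]
    congr 1
    linear_combination h2m

private lemma conj_xa_zero {m : ℕ} (c : QuaternionGroup m) :
    ∃ s : ZMod (2 * m), c * xa 0 * c⁻¹ = xa (s + s) := by
  rcases c with j | j
  · refine ⟨-j, ?_⟩
    rw [inv_a, a_mul_xa, xa_mul_a]
    congr 1
    ring
  · refine ⟨j, ?_⟩
    rw [inv_xa, xa_mul_xa, a_mul_xa]
    congr 1
    ring

end QuaternionGroup

/-- The generalized quaternion (dicyclic) group `Q_{8n} = ⟨x, y ∣ x² = (xy)² = y^{2n}⟩`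
of order `8n`, i.e. `QuaternionGroup (2n)`, has Grossman's Property A. -/
theorem quaternionGroup_propertyA : ∀ n : ℕ, 1 ≤ n →
    HasPropertyA (QuaternionGroup (2 * n)) := by
  intro n hn φ hconj
  haveI : NeZero (2 * (2 * n)) := ⟨by omega⟩
  open QuaternionGroup in
  have h2m := QuaternionGroup.two_m_eq_zero (2 * n)
  -- Step 1: find e with e * φ (a 1) * e⁻¹ = a 1
  obtain ⟨c, hc⟩ := isConj_iff.mp (hconj (.a 1))
  have he : ∃ e : QuaternionGroup (2 * n), e * φ (.a 1) * e⁻¹ = .a 1 := by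
    rcases QuaternionGroup.conj_a_one c with h | h
    · exact ⟨1, by rw [one_mul, inv_one, mul_one, ← hc, h]⟩
    · refine ⟨QuaternionGroup.xa 0, ?_⟩
      rw [← hc, h, QuaternionGroup.inv_xa, QuaternionGroup.xa_mul_a, QuaternionGroup.xa_mul_xa]
      congr 1
      linear_combination h2m
  obtain ⟨e, he⟩ := he
  -- Step 2: find s with (a s * e) * φ (xa 0) * (a s * e)⁻¹ = xa 0
  obtain ⟨c₂, hc₂⟩ := isConj_iff.mp (hconj (.xa 0))
  obtain ⟨s, hs⟩ := QuaternionGroup.conj_xa_zero (e * c₂)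
  set d : QuaternionGroup (2 * n) := QuaternionGroup.a s * e with hd
  have hd1 : d * φ (.a 1) * d⁻¹ = .a 1 := by
    have : d * φ (.a 1) * d⁻¹ =
        QuaternionGroup.a s * (e * φ (.a 1) * e⁻¹) * (QuaternionGroup.a s)⁻¹ := by
      rw [hd]; group
    rw [this, he, QuaternionGroup.inv_a, QuaternionGroup.a_mul_a, QuaternionGroup.a_mul_a]
    congr 1
    ring
  have hd2 : d * φ (.xa 0) * d⁻¹ = .xa 0 := by
    have h1 : d * φ (.xa 0) * d⁻¹ =
        QuaternionGroup.a s * ((e * c₂) * .xa 0 * (e * c₂)⁻¹) * (QuaternionGroup.a s)⁻¹ := by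
      rw [hd, ← hc₂]; group
    rw [h1, hs, QuaternionGroup.inv_a, QuaternionGroup.a_mul_xa, QuaternionGroup.xa_mul_a]
    congr 1
    ring
  -- Step 3: the conjugated automorphism is the identity
  set ψ : QuaternionGroup (2 * n) ≃* QuaternionGroup (2 * n) := φ.trans (MulAut.conj d) with hψ
  have hψ_apply : ∀ g, ψ g = d * φ g * d⁻¹ := fun g => rfl
  have hid : ∀ g, ψ g = g := by
    apply QuaternionGroup.key
    · rw [hψ_apply, hd1]
    · rw [hψ_apply, hd2]
  refine ⟨d⁻¹, fun g => ?_⟩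
  have := hid g
  rw [hψ_apply] at this
  have h2 : φ g = d⁻¹ * (d * φ g * d⁻¹) * d := by group
  rw [this] at h2
  rw [h2, inv_inv]
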